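/- A permutation avoids the generalized pattern 31-2 if and only if it avoids the classical pattern 3-1-2; that is, for π in S_n, there exist indices i < i+1 < k with π(i+1) < π(k) < π(i) if and only if there exist indices i < j < k with π(j) < π(k) < π(i). -/
import Mathlib

private lemma aux_31_2 (n : ℕ) (π : Equiv.Perm (Fin n)) :
    ∀ d : ℕ, ∀ i j k : Fin n, (j : ℕ) - (i : ℕ) = d → i < j → j < k →
      π j < π k → π k < π i →
      ∃ a b : Fin n, (b : ℕ) = (a : ℕ) + 1 ∧ b < k ∧ π b < π k ∧ π k < π a := by
  intro d
  induction d using Nat.strong_induction_on with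
  | _ d IH =>
    intro i j k hd hij hjk hjkv hki
    have hik : (i : ℕ) + 1 ≤ (j : ℕ) := hij
    have hb : (i : ℕ) + 1 < n := by have := k.isLt; have := Fin.lt_def.mp hjk; omega
    set b : Fin n := ⟨(i : ℕ) + 1, hb⟩ with hbdef
    have hbk : b < k := by
      have : (b : ℕ) ≤ (j : ℕ) := hik
      exact Fin.lt_def.mpr (lt_of_le_of_lt this hjk)
    by_cases hcase : π b < π k
    · exact ⟨i, b, rfl, hbk, hcase, hki⟩
    · have hbne : b ≠ k := ne_of_lt hbk
      have hkb : π k < π b := by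
        rcases lt_trichotomy (π b) (π k) with h | h | h
        · exact absurd h hcase
        · exact absurd (π.injective h) hbne
        · exact h
      have hbj : b ≠ j := by
        intro h
        rw [h] at hkb
        exact absurd hjkv (not_lt_of_gt hkb)
      have hblj : b < j := lt_of_le_of_ne (Fin.le_def.mpr hik) hbj
      have hlt : (j : ℕ) - (b : ℕ) < d := by
        have : (b : ℕ) = (i : ℕ) + 1 := rfl
        omega
      exact IH _ hlt b j k rfl hblj hjk hjkv hkb

theorem pattern_31_2_iff_3_1_2 (n : ℕ) (π : Equiv.Perm (Fin n)) :
    (∃ i j k : Fin n, (j : ℕ) = (i : ℕ) + 1 ∧ j < k ∧ π j < π k ∧ π k < π i) ↔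
      (∃ i j k : Fin n, i < j ∧ j < k ∧ π j < π k ∧ π k < π i) := by
  constructor
  · rintro ⟨i, j, k, hji, hjk, h1, h2⟩
    exact ⟨i, j, k, Fin.lt_def.mpr (by omega), hjk, h1, h2⟩
  · rintro ⟨i, j, k, hij, hjk, h1, h2⟩
    obtain ⟨a, b, hb, hbk, hb1, hb2⟩ := aux_31_2 n π _ i j k rfl hij hjk h1 h2
    exact ⟨a, b, k, hb, hbk, hb1, hb2⟩
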